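/- arXiv:cond-mat/0303625 — 2 statements merged into one kernel-verified Lean document; each statement's English description precedes it below -/
import Mathlib

section
/- Let P : Ω → 𝒫 and F : Ω → ℱ be random variables on a finite probability space (Ω, ℙ), with 𝒫 and ℱ finite, and assume ℙ(P = p) > 0 for every p ∈ 𝒫. If η : 𝒫 → 𝒮 (𝒮 finite) is prescient, i.e., I[F; η∘P] = I[F; P], then η refines the causal-state partition of 𝒫: for all p, p' ∈ 𝒫, η(p) = η(p') implies that p and p' are causally equivalent. -/
open scoped BigOperators
attribute [local instance] Classical.propDecidable

/-- Probability of an event on a finite probability space given by a weight function. -/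
noncomputable def prb {Ω : Type*} [Fintype Ω] (μ : Ω → ℝ) (E : Set Ω) : ℝ :=
  ∑ ω, if ω ∈ E then μ ω else 0

/-- The distribution of a random variable `X`. -/
noncomputable def pdist {Ω α : Type*} [Fintype Ω] (μ : Ω → ℝ) (X : Ω → α) (x : α) : ℝ :=
  prb μ {ω | X ω = x}

/-- Shannon entropy `H[X]` (in nats; `Real.log 0 = 0` gives the convention `0·log 0 = 0`). -/
noncomputable def Hent {Ω α : Type*} [Fintype Ω] [Fintype α] (μ : Ω → ℝ) (X : Ω → α) : ℝ :=
  -∑ x, pdist μ X x * Real.log (pdist μ X x)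

/-- Mutual information `I[X;Y] = H[X] + H[Y] - H[X,Y]`. -/
noncomputable def Iinfo {Ω α β : Type*} [Fintype Ω] [Fintype α] [Fintype β]
    (μ : Ω → ℝ) (X : Ω → α) (Y : Ω → β) : ℝ :=
  Hent μ X + Hent μ Y - Hent μ (fun ω => (X ω, Y ω))

/-- Conditional entropy `H[X|Y] = H[X,Y] - H[Y]`. -/
noncomputable def condH {Ω α β : Type*} [Fintype Ω] [Fintype α] [Fintype β]
    (μ : Ω → ℝ) (X : Ω → α) (Y : Ω → β) : ℝ :=
  Hent μ (fun ω => (X ω, Y ω)) - Hent μ Y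

/-- Conditional probability `ℙ(E | F)`. -/
noncomputable def cprob {Ω : Type*} [Fintype Ω] (μ : Ω → ℝ) (E F : Set Ω) : ℝ :=
  prb μ (E ∩ F) / prb μ F

/-- Causal equivalence of pasts: `p ∼ p'` iff they give the same conditional
distribution over futures. -/
def CausalEquiv {Ω Pst Fut : Type*} [Fintype Ω] (μ : Ω → ℝ)
    (P : Ω → Pst) (F : Ω → Fut) (p p' : Pst) : Prop :=
  ∀ f : Fut, cprob μ {ω | F ω = f} {ω | P ω = p} = cprob μ {ω | F ω = f} {ω | P ω = p'}

/-- Causal equivalence as a setoid on the space of pasts. -/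
def causalSetoid {Ω Pst Fut : Type*} [Fintype Ω] (μ : Ω → ℝ)
    (P : Ω → Pst) (F : Ω → Fut) : Setoid Pst where
  r := CausalEquiv μ P F
  iseqv := ⟨fun _ _ => rfl, fun h f => (h f).symm, fun h h' f => (h f).trans (h' f)⟩

/-- The causal state map `ε` sends a past to its causal equivalence class. -/
def causalState {Ω Pst Fut : Type*} [Fintype Ω] (μ : Ω → ℝ)
    (P : Ω → Pst) (F : Ω → Fut) (p : Pst) : Quotient (causalSetoid μ P F) :=
  Quotient.mk (causalSetoid μ P F) p

section aux
variable {Ω : Type*} [Fintype Ω] (μ : Ω → ℝ)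

lemma prb_nonneg_aux (hμ0 : ∀ ω, 0 ≤ μ ω) (E : Set Ω) : 0 ≤ prb μ E := by
  apply Finset.sum_nonneg; intro ω _; split <;> simp [hμ0 ω]

lemma pdist_nonneg_aux (hμ0 : ∀ ω, 0 ≤ μ ω) {α : Type*} (X : Ω → α) (x : α) :
    0 ≤ pdist μ X x := prb_nonneg_aux μ hμ0 _

lemma sum_pdist_aux (hμ1 : ∑ ω, μ ω = 1) {α : Type*} [Fintype α] (X : Ω → α) :
    ∑ x, pdist μ X x = 1 := by
  unfold pdist prb
  rw [Finset.sum_comm]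
  simpa using hμ1

lemma marg_fst {α β : Type*} [Fintype α] (X : Ω → α) (Y : Ω → β) (y : β) :
    ∑ x, pdist μ (fun ω => (X ω, Y ω)) (x, y) = pdist μ Y y := by
  unfold pdist prb
  rw [Finset.sum_comm]
  refine Finset.sum_congr rfl fun ω _ => ?_
  simp only [Set.mem_setOf_eq, Prod.mk.injEq, ite_and]
  simp

lemma pdist_comp {α β : Type*} [Fintype α] (X : Ω → α) (g : α → β) (b : β) :
    pdist μ (fun ω => g (X ω)) b = ∑ a, if g a = b then pdist μ X a else 0 := by
  unfold pdist prb
  have push : ∀ (P : Prop) [Decidable P] (f : Ω → ℝ),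
      (if P then ∑ ω, f ω else 0) = ∑ ω, if P then f ω else 0 := by
    intros P _ f; split <;> simp
  simp only [push]
  rw [Finset.sum_comm]
  refine Finset.sum_congr rfl fun ω _ => ?_
  have : ∀ a : α, (if g a = b then if ω ∈ {ω | X ω = a} then μ ω else 0 else 0)
      = if X ω = a then (if g (X ω) = b then μ ω else 0) else 0 := by
    intro a
    by_cases h : X ω = a
    · subst h; simp
    · simp [h]
  simp only [this]
  simp

lemma pdist_comp_pair {γ α β : Type*} [Fintype α] (W : Ω → γ) (X : Ω → α) (g : α → β)
    (c : γ) (b : β) :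
    pdist μ (fun ω => (W ω, g (X ω))) (c, b)
      = ∑ a, if g a = b then pdist μ (fun ω => (W ω, X ω)) (c, a) else 0 := by
  unfold pdist prb
  have push : ∀ (P : Prop) [Decidable P] (f : Ω → ℝ),
      (if P then ∑ ω, f ω else 0) = ∑ ω, if P then f ω else 0 := by
    intros P _ f; split <;> simp
  simp only [push]
  rw [Finset.sum_comm]
  refine Finset.sum_congr rfl fun ω _ => ?_
  symm
  rw [Finset.sum_eq_single (X ω)]
  · simp only [Set.mem_setOf_eq, Prod.mk.injEq]
    by_cases h1 : W ω = c <;> by_cases h2 : g (X ω) = b <;> simp [h1, h2]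
  · intro a _ ha
    split_ifs with h1 h2
    · exact absurd (congrArg Prod.snd h2) (Ne.symm ha)
    · rfl
    · rfl
  · intro h; exact absurd (Finset.mem_univ _) h

end aux

lemma sum_group {α β : Type*} [Fintype α] [Fintype β] (g : α → β) (w : α → ℝ) (A : β → ℝ) :
    ∑ b, (∑ a, if g a = b then w a else 0) * A b = ∑ a, w a * A (g a) := by
  simp only [Finset.sum_mul, ite_mul, zero_mul]
  rw [Finset.sum_comm]
  simp

lemma key_nonneg (r q R Q : ℝ) (hq : 0 < q) (hr : 0 ≤ r) (hrR : r ≤ R) (hQ : 0 < Q) :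
    0 ≤ r * (Real.log r + Real.log Q - Real.log q - Real.log R) + (q * R / Q - r) := by
  rcases eq_or_lt_of_le hr with h0 | h0
  · have hR : 0 ≤ R := h0 ▸ hrR
    rw [← h0]; simp
    exact div_nonneg (mul_nonneg hq.le hR) hQ.le
  · have hR : 0 < R := lt_of_lt_of_le h0 hrR
    set x : ℝ := q * R / (r * Q) with hx
    have hxpos : 0 < x := by positivity
    have hlog : Real.log r + Real.log Q - Real.log q - Real.log R = -Real.log x := by
      rw [hx, Real.log_div (by positivity) (by positivity), Real.log_mul hq.ne' hR.ne',
        Real.log_mul h0.ne' hQ.ne']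
      ring
    have hqRQ : q * R / Q = r * x := by
      field_simp [hx]
      rw [hx]; field_simp
    rw [hlog, hqRQ]
    have := Real.log_le_sub_one_of_pos hxpos
    nlinarith

lemma key_eq (r q R Q : ℝ) (hq : 0 < q) (hr : 0 ≤ r) (hrR : r ≤ R) (hQ : 0 < Q)
    (h : r * (Real.log r + Real.log Q - Real.log q - Real.log R) + (q * R / Q - r) = 0) :
    r / q = R / Q := by
  rcases eq_or_lt_of_le hr with h0 | h0
  · rw [← h0] at h ⊢
    simp at h
    have hR : R = 0 := by
      rcases h with (h | h) | h
      · exact absurd h hq.ne'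
      · exact h
      · exact absurd h hQ.ne'
    simp [hR]
  · have hR : 0 < R := lt_of_lt_of_le h0 hrR
    set x : ℝ := q * R / (r * Q) with hx
    have hxpos : 0 < x := by positivity
    have hlog : Real.log r + Real.log Q - Real.log q - Real.log R = -Real.log x := by
      rw [hx, Real.log_div (by positivity) (by positivity), Real.log_mul hq.ne' hR.ne',
        Real.log_mul h0.ne' hQ.ne']
      ring
    have hqRQ : q * R / Q = r * x := by
      field_simp [hx]; rw [hx]; field_simp
    rw [hlog, hqRQ] at h
    have hx1 : x = 1 := by
      by_contra hne
      have := Real.log_lt_sub_one_of_pos hxpos hne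
      nlinarith
    have : q * R = r * Q := by
      have := hx ▸ hx1
      field_simp at this
      linarith
    field_simp
    linarith


lemma gibbs_eq {Pst Fut S : Type*} [Fintype Pst] [Fintype Fut] [Fintype S]
    (q : Pst → ℝ) (r : Fut → Pst → ℝ) (η : Pst → S)
    (hq : ∀ p, 0 < q p) (hr : ∀ f p, 0 ≤ r f p)
    (hD : ∑ f, ∑ p, r f p *
        (Real.log (r f p) + Real.log (∑ p', if η p' = η p then q p' else 0)
          - Real.log (q p) - Real.log (∑ p', if η p' = η p then r f p' else 0)) = 0) :
    ∀ (f : Fut) (p : Pst), r f p / q p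
      = (∑ p', if η p' = η p then r f p' else 0) / (∑ p', if η p' = η p then q p' else 0) := by
  set Q : S → ℝ := fun s => ∑ p', if η p' = s then q p' else 0 with hQdef
  set R : Fut → S → ℝ := fun f s => ∑ p', if η p' = s then r f p' else 0 with hRdef
  have hQnn : ∀ s, 0 ≤ Q s := fun s =>
    Finset.sum_nonneg fun p' _ => by split <;> [exact (hq p').le; rfl]
  have hRterm : ∀ f s, ∀ p' : Pst, 0 ≤ if η p' = s then r f p' else 0 := by
    intro f s p'; split <;> [exact hr f p'; rfl]
  have hqQ : ∀ p, q p ≤ Q (η p) := by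
    intro p
    have := Finset.single_le_sum (f := fun p' => if η p' = η p then q p' else 0)
      (fun p' _ => by split <;> [exact (hq p').le; rfl]) (Finset.mem_univ p)
    simpa using this
  have hQpos : ∀ p, 0 < Q (η p) := fun p => lt_of_lt_of_le (hq p) (hqQ p)
  have hrR : ∀ f p, r f p ≤ R f (η p) := by
    intro f p
    have := Finset.single_le_sum (f := fun p' => if η p' = η p then r f p' else 0)
      (fun p' _ => hRterm f (η p) p') (Finset.mem_univ p)
    simpa using this
  have hRzero : ∀ f s, Q s = 0 → R f s = 0 := by
    intro f s hQs
    have hfib : ∀ p' : Pst, η p' ≠ s := by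
      intro p' hps
      have := (Finset.sum_eq_zero_iff_of_nonneg
        (fun p'' _ => by split <;> [exact (hq p'').le; rfl])).mp hQs p' (Finset.mem_univ p')
      rw [if_pos hps] at this
      exact (hq p').ne' this
    exact Finset.sum_eq_zero fun p' _ => if_neg (hfib p')
  -- the correction term vanishes
  have hcorr : ∀ f : Fut, ∑ p, q p * R f (η p) / Q (η p) = ∑ p, r f p := by
    intro f
    have e1 : ∑ p, q p * R f (η p) / Q (η p) = ∑ p, q p * (R f (η p) / Q (η p)) := by
      refine Finset.sum_congr rfl fun p _ => (mul_div_assoc _ _ _)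
    rw [e1, ← sum_group η q (fun s => R f s / Q s)]
    have e2 : ∀ s, Q s * (R f s / Q s) = R f s := by
      intro s
      rcases eq_or_lt_of_le (hQnn s) with h | h
      · rw [← h, hRzero f s h.symm]; ring
      · field_simp
    rw [Finset.sum_congr rfl fun s _ => e2 s]
    rw [Finset.sum_comm]
    simp
  have hgnn : ∀ (f : Fut) (p : Pst), 0 ≤ r f p *
      (Real.log (r f p) + Real.log (Q (η p)) - Real.log (q p) - Real.log (R f (η p)))
      + (q p * R f (η p) / Q (η p) - r f p) :=
    fun f p => key_nonneg _ _ _ _ (hq p) (hr f p) (hrR f p) (hQpos p)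
  have hsum0 : ∑ f, ∑ p, (r f p *
      (Real.log (r f p) + Real.log (Q (η p)) - Real.log (q p) - Real.log (R f (η p)))
      + (q p * R f (η p) / Q (η p) - r f p)) = 0 := by
    have : ∀ f : Fut, ∑ p, (r f p *
        (Real.log (r f p) + Real.log (Q (η p)) - Real.log (q p) - Real.log (R f (η p)))
        + (q p * R f (η p) / Q (η p) - r f p))
        = ∑ p, r f p *
        (Real.log (r f p) + Real.log (Q (η p)) - Real.log (q p) - Real.log (R f (η p))) := by
      intro f
      rw [Finset.sum_add_distrib, Finset.sum_sub_distrib, hcorr f]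
      ring
    simp only [this]
    exact hD
  have hg0 : ∀ (f : Fut) (p : Pst), (r f p *
      (Real.log (r f p) + Real.log (Q (η p)) - Real.log (q p) - Real.log (R f (η p)))
      + (q p * R f (η p) / Q (η p) - r f p)) = 0 := by
    intro f p
    have h1 : ∀ f : Fut, (0:ℝ) ≤ ∑ p, (r f p *
        (Real.log (r f p) + Real.log (Q (η p)) - Real.log (q p) - Real.log (R f (η p)))
        + (q p * R f (η p) / Q (η p) - r f p)) :=
      fun f => Finset.sum_nonneg fun p _ => hgnn f p
    have h3 := (Finset.sum_eq_zero_iff_of_nonneg (fun f _ => h1 f)).mp hsum0 f (Finset.mem_univ f)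
    exact (Finset.sum_eq_zero_iff_of_nonneg (fun p _ => hgnn f p)).mp h3 p (Finset.mem_univ p)
  intro f p
  exact key_eq _ _ _ _ (hq p) (hr f p) (hrR f p) (hQpos p) (hg0 f p)


lemma bridge {Pst Fut S : Type*} [Fintype Pst] [Fintype Fut] [Fintype S]
    (q : Pst → ℝ) (r : Fut → Pst → ℝ) (η : Pst → S)
    (hmarg : ∀ p, ∑ f, r f p = q p) :
    ∑ f, ∑ p, r f p *
        (Real.log (r f p) + Real.log (∑ p', if η p' = η p then q p' else 0)
          - Real.log (q p) - Real.log (∑ p', if η p' = η p then r f p' else 0))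
    = (∑ f, ∑ p, r f p * Real.log (r f p))
      + (∑ s, (∑ p', if η p' = s then q p' else 0)
          * Real.log (∑ p', if η p' = s then q p' else 0))
      - (∑ p, q p * Real.log (q p))
      - (∑ f, ∑ s, (∑ p', if η p' = s then r f p' else 0)
          * Real.log (∑ p', if η p' = s then r f p' else 0)) := by
  set Q : S → ℝ := fun s => ∑ p', if η p' = s then q p' else 0 with hQdef
  set R : Fut → S → ℝ := fun f s => ∑ p', if η p' = s then r f p' else 0 with hRdef
  have hsplit : ∀ f : Fut, ∑ p, r f p *
      (Real.log (r f p) + Real.log (Q (η p)) - Real.log (q p) - Real.log (R f (η p)))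
      = (∑ p, r f p * Real.log (r f p)) + (∑ p, r f p * Real.log (Q (η p)))
        - (∑ p, r f p * Real.log (q p)) - (∑ p, r f p * Real.log (R f (η p))) := by
    intro f
    simp only [mul_add, mul_sub, Finset.sum_add_distrib, Finset.sum_sub_distrib]
  rw [Finset.sum_congr rfl fun f _ => hsplit f]
  rw [Finset.sum_sub_distrib, Finset.sum_sub_distrib, Finset.sum_add_distrib]
  have e3 : ∑ f, ∑ p, r f p * Real.log (q p) = ∑ p, q p * Real.log (q p) := by
    rw [Finset.sum_comm]
    refine Finset.sum_congr rfl fun p _ => ?_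
    rw [← Finset.sum_mul, hmarg]
  have e2 : ∑ f, ∑ p, r f p * Real.log (Q (η p)) = ∑ s, Q s * Real.log (Q s) := by
    rw [Finset.sum_comm]
    have : ∀ p : Pst, ∑ f, r f p * Real.log (Q (η p)) = q p * Real.log (Q (η p)) := by
      intro p; rw [← Finset.sum_mul, hmarg]
    simp only [this]
    exact sum_group η q (fun s => Real.log (Q s)) |>.symm
  have e4 : ∀ f : Fut, ∑ p, r f p * Real.log (R f (η p)) = ∑ s, R f s * Real.log (R f s) := by
    intro f
    exact (sum_group η (r f) (fun s => Real.log (R f s))).symm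
  rw [e3, e2]
  have e4' : ∑ f, ∑ p, r f p * Real.log (R f (η p))
      = ∑ f, ∑ s, R f s * Real.log (R f s) :=
    Finset.sum_congr rfl fun f _ => e4 f
  rw [e4']

/-- any prescient partition of the pasts refines the causal states:
if `I[F; η∘P] = I[F; P]` then histories identified by `η` are causally equivalent. -/
theorem prescient_refines_causal_states {Ω Pst Fut S : Type*}
    [Fintype Ω] [Fintype Pst] [Fintype Fut] [Fintype S]
    (μ : Ω → ℝ) (hμ0 : ∀ ω, 0 ≤ μ ω) (hμ1 : ∑ ω, μ ω = 1)
    (P : Ω → Pst) (F : Ω → Fut)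
    (hP : ∀ p : Pst, 0 < prb μ {ω | P ω = p})
    (η : Pst → S) (hpres : Iinfo μ F (fun ω => η (P ω)) = Iinfo μ F P) :
    ∀ p p' : Pst, η p = η p' → CausalEquiv μ P F p p' := by
  intro p p' hη f
  have hmarg : ∀ pp : Pst, ∑ f, pdist μ (fun ω => (F ω, P ω)) (f, pp) = pdist μ P pp :=
    fun pp => marg_fst μ F P pp
  have hq : ∀ pp : Pst, 0 < pdist μ P pp := hP
  have hr : ∀ (f : Fut) (pp : Pst), 0 ≤ pdist μ (fun ω => (F ω, P ω)) (f, pp) :=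
    fun f pp => pdist_nonneg_aux μ hμ0 _ _
  have hA : Hent μ P = -∑ pp, pdist μ P pp * Real.log (pdist μ P pp) := rfl
  have hB : Hent μ (fun ω => (F ω, P ω))
      = -∑ f, ∑ pp, pdist μ (fun ω => (F ω, P ω)) (f, pp)
          * Real.log (pdist μ (fun ω => (F ω, P ω)) (f, pp)) := by
    rw [Hent, Fintype.sum_prod_type]
  have hC : Hent μ (fun ω => η (P ω))
      = -∑ s, (∑ pp, if η pp = s then pdist μ P pp else 0)
          * Real.log (∑ pp, if η pp = s then pdist μ P pp else 0) := by
    rw [Hent]; simp only [pdist_comp]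
  have hD2 : Hent μ (fun ω => (F ω, η (P ω)))
      = -∑ f, ∑ s, (∑ pp, if η pp = s then pdist μ (fun ω => (F ω, P ω)) (f, pp) else 0)
          * Real.log (∑ pp, if η pp = s then pdist μ (fun ω => (F ω, P ω)) (f, pp) else 0) := by
    rw [Hent, Fintype.sum_prod_type]; simp only [pdist_comp_pair]
  have hD : ∑ f, ∑ pp, pdist μ (fun ω => (F ω, P ω)) (f, pp) *
      (Real.log (pdist μ (fun ω => (F ω, P ω)) (f, pp))
        + Real.log (∑ p', if η p' = η pp then pdist μ P p' else 0)
        - Real.log (pdist μ P pp)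
        - Real.log (∑ p', if η p' = η pp then pdist μ (fun ω => (F ω, P ω)) (f, p') else 0)) = 0 := by
    rw [bridge (pdist μ P) (fun f pp => pdist μ (fun ω => (F ω, P ω)) (f, pp)) η hmarg]
    simp only [Iinfo] at hpres
    linarith [hA, hB, hC, hD2, hpres]
  have main := gibbs_eq (pdist μ P) (fun f pp => pdist μ (fun ω => (F ω, P ω)) (f, pp)) η hq hr hD
  have hcp : ∀ pp : Pst, cprob μ {ω | F ω = f} {ω | P ω = pp}
      = pdist μ (fun ω => (F ω, P ω)) (f, pp) / pdist μ P pp := by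
    intro pp
    have hset : {ω | F ω = f} ∩ {ω | P ω = pp} = {ω | (fun ω => (F ω, P ω)) ω = (f, pp)} := by
      ext ω; simp [Prod.ext_iff]
    rw [cprob, hset]; rfl
  rw [hcp p, hcp p', main f p, main f p', hη]
end

section
/- Let P : Ω → 𝒫 and F : Ω → ℱ be random variables on a finite probability space (Ω, ℙ), with 𝒫 and ℱ finite, and assume ℙ(P = p) > 0 for every p ∈ 𝒫. If η : 𝒫 → 𝒮 (𝒮 finite) is prescient, i.e., I[F; η∘P] = I[F; P], then the statistical complexity of η is at least that of the causal states: H[η∘P] ≥ H[ε∘P]. Hence the causal states are the prescient states of minimal statistical complexity. -/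
open scoped BigOperators
attribute [local instance] Classical.propDecidable

lemma my_prb_nonneg {Ω : Type*} [Fintype Ω] (μ : Ω → ℝ) (hμ0 : ∀ ω, 0 ≤ μ ω) (E : Set Ω) :
    0 ≤ prb μ E := by
  apply Finset.sum_nonneg
  intro ω _
  split <;> simp [hμ0 ω]

lemma my_pdist_nonneg {Ω α : Type*} [Fintype Ω] (μ : Ω → ℝ) (hμ0 : ∀ ω, 0 ≤ μ ω)
    (X : Ω → α) (x : α) : 0 ≤ pdist μ X x := my_prb_nonneg μ hμ0 _

lemma my_pdist_fiber {Ω α β : Type*} [Fintype Ω] [Fintype α] (μ : Ω → ℝ)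
    (X : Ω → α) (g : α → β) (b : β) :
    pdist μ (fun ω => g (X ω)) b = ∑ a ∈ Finset.univ.filter (fun a => g a = b), pdist μ X a := by
  unfold pdist prb
  rw [Finset.sum_comm]
  apply Finset.sum_congr rfl
  intro ω _
  by_cases h : g (X ω) = b
  · rw [Finset.sum_eq_single (X ω)]
    · simp [h]
    · intro a _ ha; simp [Ne.symm ha]
    · simp [h]
  · rw [Finset.sum_eq_zero]
    · simp [h]
    · intro a ha
      simp only [Finset.mem_filter] at ha
      by_cases hXa : X ω = a
      · exact absurd (hXa ▸ ha.2) h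
      · simp [hXa]

lemma my_Hent_comp_le {Ω α β : Type*} [Fintype Ω] [Fintype α] [Fintype β]
    (μ : Ω → ℝ) (hμ0 : ∀ ω, 0 ≤ μ ω) (X : Ω → α) (g : α → β) :
    Hent μ (fun ω => g (X ω)) ≤ Hent μ X := by
  unfold Hent
  rw [neg_le_neg_iff]
  have key : ∀ b : β, pdist μ (fun ω => g (X ω)) b * Real.log (pdist μ (fun ω => g (X ω)) b)
      = ∑ a ∈ Finset.univ.filter (fun a => g a = b),
          pdist μ X a * Real.log (pdist μ (fun ω => g (X ω)) b) := by
    intro b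
    rw [← Finset.sum_mul, ← my_pdist_fiber]
  calc ∑ x, pdist μ X x * Real.log (pdist μ X x)
      ≤ ∑ x, pdist μ X x * Real.log (pdist μ (fun ω => g (X ω)) (g x)) := by
        apply Finset.sum_le_sum
        intro a _
        rcases eq_or_lt_of_le (my_pdist_nonneg μ hμ0 X a) with h0 | h0
        · rw [← h0]; simp
        · apply mul_le_mul_of_nonneg_left _ (le_of_lt h0)
          apply Real.log_le_log h0
          rw [my_pdist_fiber μ X g (g a)]
          apply Finset.single_le_sum (fun a _ => my_pdist_nonneg μ hμ0 X a)
          simp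
    _ = ∑ b, ∑ a ∈ Finset.univ.filter (fun a => g a = b),
          pdist μ X a * Real.log (pdist μ (fun ω => g (X ω)) (g a)) :=
        (Finset.sum_fiberwise _ _ _).symm
    _ = ∑ b, pdist μ (fun ω => g (X ω)) b * Real.log (pdist μ (fun ω => g (X ω)) b) := by
        apply Finset.sum_congr rfl
        intro b _
        rw [key b]
        apply Finset.sum_congr rfl
        intro a ha
        simp only [Finset.mem_filter] at ha
        rw [ha.2]

lemma my_gibbs {ι : Type*} [Fintype ι] (q r : ι → ℝ)
    (hq0 : ∀ i, 0 ≤ q i) (hq1 : ∑ i, q i = 1) (hr1 : ∑ i, r i = 1)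
    (habs : ∀ i, r i = 0 → q i = 0) (hr0 : ∀ i, 0 ≤ r i) :
    0 ≤ ∑ i, q i * (Real.log (q i) - Real.log (r i)) ∧
      (∑ i, q i * (Real.log (q i) - Real.log (r i)) = 0 → ∀ i, q i = r i) := by
  have key : ∀ i, q i - r i ≤ q i * (Real.log (q i) - Real.log (r i)) ∧
      (q i ≠ r i → q i - r i < q i * (Real.log (q i) - Real.log (r i))) := by
    intro i
    rcases eq_or_lt_of_le (hq0 i) with h0 | h0
    · constructor
      · rw [← h0]; simp [hr0 i]
      · intro hne
        rw [← h0] at hne ⊢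
        simp only [zero_mul]
        have : 0 < r i := lt_of_le_of_ne (hr0 i) (Ne.symm (by simpa using hne.symm))
        linarith
    · have hri : 0 < r i := lt_of_le_of_ne (hr0 i) (fun h => by
        have := habs i h.symm; linarith)
      have hdiv : 0 < r i / q i := div_pos hri h0
      have hlog : Real.log (r i / q i) ≤ r i / q i - 1 := Real.log_le_sub_one_of_pos hdiv
      have hlogd : Real.log (r i / q i) = Real.log (r i) - Real.log (q i) :=
        Real.log_div (ne_of_gt hri) (ne_of_gt h0)
      have hmul : q i * (r i / q i - 1) = r i - q i := by field_simp
      constructor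
      · nlinarith [mul_le_mul_of_nonneg_left hlog (le_of_lt h0)]
      · intro hne
        have hne1 : r i / q i ≠ 1 :=
          fun h => hne ((div_eq_one_iff_eq (ne_of_gt h0)).mp h).symm
        have hslog : Real.log (r i / q i) < r i / q i - 1 :=
          Real.log_lt_sub_one_of_pos hdiv hne1
        nlinarith [mul_lt_mul_of_pos_left hslog h0]
  have hlb : ∑ i, (q i - r i) ≤ ∑ i, q i * (Real.log (q i) - Real.log (r i)) :=
    Finset.sum_le_sum (fun i _ => (key i).1)
  have hzero : ∑ i : ι, (q i - r i) = 0 := by rw [Finset.sum_sub_distrib, hq1, hr1]; ring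
  constructor
  · linarith
  · intro hs i
    by_contra hne
    have : ∑ j : ι, (q j - r j) < ∑ j, q j * (Real.log (q j) - Real.log (r j)) := by
      apply Finset.sum_lt_sum (fun j _ => (key j).1) ⟨i, Finset.mem_univ i, (key i).2 hne⟩
    rw [hzero, hs] at this
    exact lt_irrefl 0 this

lemma my_split_log (j w : ℝ) (hw : j ≠ 0 → w ≠ 0) :
    j * Real.log j = j * Real.log w + j * Real.log (j / w) := by
  by_cases hj : j = 0
  · simp [hj]
  · have hw' := hw hj
    have hdw : j / w ≠ 0 := div_ne_zero hj hw'
    rw [← mul_add, ← Real.log_mul hw' hdw, mul_div_cancel₀ _ hw']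

lemma my_sum_snd_fiber {α β M : Type*} [Fintype α] [Fintype β] [AddCommMonoid M]
    (f : α × β → M) (b : β) :
    ∑ a ∈ Finset.univ.filter (fun a : α × β => a.2 = b), f a = ∑ x, f (x, b) := by
  rw [Finset.sum_filter, Fintype.sum_prod_type]
  apply Finset.sum_congr rfl
  intro x _
  simp

lemma my_fiber_weight {α β : Type*} [Fintype α] [Fintype β] (f : α → ℝ) (g : α → β) (m : β → ℝ)
    (hm : ∀ b, m b = ∑ a ∈ Finset.univ.filter (fun a => g a = b), f a) (L : β → ℝ) :
    ∑ a, f a * L (g a) = ∑ b, m b * L b := by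
  rw [← Finset.sum_fiberwise Finset.univ g (fun a => f a * L (g a))]
  apply Finset.sum_congr rfl
  intro b _
  rw [hm b, Finset.sum_mul]
  apply Finset.sum_congr rfl
  intro a ha
  simp only [Finset.mem_filter] at ha
  rw [ha.2]


/-- the causal states are the prescient states of minimal statistical
complexity: any prescient `η` has `H[η∘P] ≥ H[ε∘P]`. -/
theorem causal_states_minimal_complexity {Ω Pst Fut S : Type*}
    [Fintype Ω] [Fintype Pst] [Fintype Fut] [Fintype S]
    (μ : Ω → ℝ) (hμ0 : ∀ ω, 0 ≤ μ ω) (hμ1 : ∑ ω, μ ω = 1)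
    (P : Ω → Pst) (F : Ω → Fut)
    (hP : ∀ p : Pst, 0 < prb μ {ω | P ω = p})
    (η : Pst → S) (hpres : Iinfo μ F (fun ω => η (P ω)) = Iinfo μ F P) :
    Hent μ (fun ω => causalState μ P F (P ω)) ≤ Hent μ (fun ω => η (P ω)) := by
  classical
  set jd : Fut × Pst → ℝ := pdist μ (fun ω => (F ω, P ω)) with hjd
  set jz : Fut × S → ℝ := pdist μ (fun ω => (F ω, η (P ω))) with hjz
  set w : Pst → ℝ := pdist μ P with hw
  set zd : S → ℝ := pdist μ (fun ω => η (P ω)) with hzd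
  have hjd0 : ∀ a, 0 ≤ jd a := fun a => my_pdist_nonneg μ hμ0 _ a
  have hjz0 : ∀ b, 0 ≤ jz b := fun b => my_pdist_nonneg μ hμ0 _ b
  have hwpos : ∀ p, 0 < w p := fun p => hP p
  have hwf : ∀ p, w p = ∑ a ∈ Finset.univ.filter (fun a : Fut × Pst => a.2 = p), jd a :=
    fun p => my_pdist_fiber μ (fun ω => (F ω, P ω)) (fun a => a.2) p
  have hzf : ∀ s, zd s = ∑ a ∈ Finset.univ.filter (fun a : Fut × Pst => η a.2 = s), jd a :=
    fun s => my_pdist_fiber μ (fun ω => (F ω, P ω)) (fun a => η a.2) s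
  have hjzf : ∀ b : Fut × S,
      jz b = ∑ a ∈ @Finset.filter _ (fun a : Fut × Pst => (a.1, η a.2) = b)
        (fun a => Classical.propDecidable _) Finset.univ, jd a :=
    fun b => my_pdist_fiber μ (fun ω => (F ω, P ω)) (fun a => (a.1, η a.2)) b
  have hzdpos : ∀ p, 0 < zd (η p) := by
    intro p
    have hsub : (Finset.univ.filter (fun a : Fut × Pst => a.2 = p)) ⊆
        (Finset.univ.filter (fun a : Fut × Pst => η a.2 = η p)) := by
      intro a ha
      simp only [Finset.mem_filter] at ha ⊢
      exact ⟨ha.1, by rw [ha.2]⟩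
    have hle : w p ≤ zd (η p) := by
      rw [hwf p, hzf (η p)]
      exact Finset.sum_le_sum_of_subset_of_nonneg hsub (fun a _ _ => hjd0 a)
    exact lt_of_lt_of_le (hwpos p) hle
  set q : Fut × Pst → ℝ := fun a => jd a / w a.2 with hq
  set r : Fut × S → ℝ := fun b => jz b / zd b.2 with hr
  have hmargq : ∀ p, ∑ f, jd (f, p) = w p := by
    intro p
    rw [hwf p, my_sum_snd_fiber]
  have hmargz : ∀ s, ∑ f, jz (f, s) = zd s := by
    intro s
    rw [show zd s = ∑ b ∈ Finset.univ.filter (fun b : Fut × S => b.2 = s), jz b from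
      my_pdist_fiber μ (fun ω => (F ω, η (P ω))) (fun b => b.2) s, my_sum_snd_fiber]
  -- entropy decompositions
  have hA : Hent μ (fun ω => (F ω, P ω)) - Hent μ P = -∑ a, jd a * Real.log (q a) := by
    have h1 : Hent μ (fun ω => (F ω, P ω)) = -∑ a, jd a * Real.log (jd a) := rfl
    have h3 : Hent μ P = -∑ p, w p * Real.log (w p) := rfl
    have hsplit : ∀ a : Fut × Pst, jd a * Real.log (jd a)
        = jd a * Real.log (w a.2) + jd a * Real.log (q a) :=
      fun a => my_split_log (jd a) (w a.2) (fun _ => ne_of_gt (hwpos a.2))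
    have h2 : ∑ a, jd a * Real.log (w a.2) = ∑ p, w p * Real.log (w p) :=
      my_fiber_weight jd (fun a => a.2) w hwf (fun p => Real.log (w p))
    rw [h1, h3, Finset.sum_congr rfl (fun a _ => hsplit a), Finset.sum_add_distrib, h2]
    ring
  have hB : Hent μ (fun ω => (F ω, η (P ω))) - Hent μ (fun ω => η (P ω))
      = -∑ b, jz b * Real.log (r b) := by
    have h1 : Hent μ (fun ω => (F ω, η (P ω))) = -∑ b, jz b * Real.log (jz b) := rfl
    have h3 : Hent μ (fun ω => η (P ω)) = -∑ s, zd s * Real.log (zd s) := rfl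
    have hjzz : ∀ b : Fut × S, jz b ≠ 0 → zd b.2 ≠ 0 := by
      intro b hb h0
      apply hb
      have hle : jz b ≤ zd b.2 := by
        rw [← hmargz b.2]
        have := Finset.single_le_sum (f := fun f => jz (f, b.2))
          (fun f _ => hjz0 _) (Finset.mem_univ b.1)
        simpa using this
      exact le_antisymm (h0 ▸ hle) (hjz0 b)
    have hsplit : ∀ b : Fut × S, jz b * Real.log (jz b)
        = jz b * Real.log (zd b.2) + jz b * Real.log (r b) :=
      fun b => my_split_log (jz b) (zd b.2) (hjzz b)
    have hzfib : ∀ s, zd s = ∑ b ∈ Finset.univ.filter (fun b : Fut × S => b.2 = s), jz b := by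
      intro s
      rw [my_sum_snd_fiber, hmargz]
    have h2 : ∑ b, jz b * Real.log (zd b.2) = ∑ s, zd s * Real.log (zd s) :=
      my_fiber_weight jz (fun b => b.2) zd hzfib (fun s => Real.log (zd s))
    rw [h1, h3, Finset.sum_congr rfl (fun b _ => hsplit b), Finset.sum_add_distrib, h2]
    ring
  have hconv : ∑ a : Fut × Pst, jd a * Real.log (r (a.1, η a.2)) = ∑ b, jz b * Real.log (r b) :=
    my_fiber_weight jd (fun a => (a.1, η a.2)) jz hjzf (fun b => Real.log (r b))
  have hC : ∑ a : Fut × Pst, jd a * (Real.log (q a) - Real.log (r (a.1, η a.2))) = 0 := by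
    have hd : ∑ a : Fut × Pst, jd a * (Real.log (q a) - Real.log (r (a.1, η a.2)))
        = ∑ a, jd a * Real.log (q a) - ∑ a, jd a * Real.log (r (a.1, η a.2)) := by
      simp only [mul_sub]
      rw [Finset.sum_sub_distrib]
    simp only [Iinfo] at hpres
    rw [hd, hconv]
    linarith [hA, hB]
  set D : Pst → ℝ := fun p => ∑ f, q (f, p) * (Real.log (q (f, p)) - Real.log (r (f, η p)))
    with hD
  have hjdq : ∀ a : Fut × Pst, jd a = w a.2 * q a := by
    intro a
    rw [hq, ← mul_div_assoc, mul_div_cancel_left₀ _ (ne_of_gt (hwpos a.2))]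
  have hprod : ∑ a : Fut × Pst, jd a * (Real.log (q a) - Real.log (r (a.1, η a.2)))
      = ∑ p, w p * D p := by
    rw [Fintype.sum_prod_type, Finset.sum_comm]
    apply Finset.sum_congr rfl
    intro p _
    rw [hD, Finset.mul_sum]
    apply Finset.sum_congr rfl
    intro f _
    rw [hjdq (f, p)]
    ring
  have hgibbs : ∀ p, (0 ≤ D p) ∧ (D p = 0 → ∀ f, q (f, p) = r (f, η p)) := by
    intro p
    exact my_gibbs (fun f => q (f, p)) (fun f => r (f, η p))
      (fun f => div_nonneg (hjd0 _) (le_of_lt (hwpos p)))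
      (by simp only [hq]
          rw [← Finset.sum_div, hmargq p, div_self (ne_of_gt (hwpos p))])
      (by simp only [hr]
          rw [← Finset.sum_div, hmargz (η p), div_self (ne_of_gt (hzdpos p))])
      (by intro f hrf
          have hjz0' : jz (f, η p) = 0 := by
            have h' := hrf
            rw [hr] at h'
            simpa [div_eq_zero_iff, ne_of_gt (hzdpos p)] using h'
          have hjd0' : jd (f, p) = 0 := by
            have hsum0 := (hjzf (f, η p)) ▸ hjz0'
            have := (Finset.sum_eq_zero_iff_of_nonneg
              (fun a _ => hjd0 a)).mp hsum0 (f, p) (by simp)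
            exact this
          rw [hq]
          simp [hjd0'])
      (fun f => div_nonneg (hjz0 _) (le_of_lt (hzdpos p)))
  have hDzero : ∀ p, D p = 0 := by
    have hsum0 : ∑ p, w p * D p = 0 := by rw [← hprod, hC]
    intro p
    have := (Finset.sum_eq_zero_iff_of_nonneg
      (fun p _ => mul_nonneg (le_of_lt (hwpos p)) (hgibbs p).1)).mp hsum0 p (Finset.mem_univ p)
    rcases mul_eq_zero.mp this with h | h
    · exact absurd h (ne_of_gt (hwpos p))
    · exact h
  have heq : ∀ p f, q (f, p) = r (f, η p) := fun p => (hgibbs p).2 (hDzero p)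
  have hcprob : ∀ f p, cprob μ {ω | F ω = f} {ω | P ω = p} = q (f, p) := by
    intro f p
    have hset : ({ω | F ω = f} ∩ {ω | P ω = p} : Set Ω) = {ω | (F ω, P ω) = (f, p)} := by
      ext ω
      simp [Prod.ext_iff]
    rw [hq, hjd, hw]
    unfold cprob
    rw [hset]
    rfl
  have hfac : ∀ p p', η p = η p' → CausalEquiv μ P F p p' := by
    intro p p' hpp' f
    rw [hcprob f p, hcprob f p', heq p f, heq p' f, hpp']
  -- final step
  have hΩ : Nonempty Ω := by
    by_contra h
    rw [not_nonempty_iff] at h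
    rw [Finset.univ_eq_empty, Finset.sum_empty] at hμ1
    norm_num at hμ1
  set g : S → Quotient (causalSetoid μ P F) := fun s =>
    if h : ∃ p, η p = s then causalState μ P F h.choose
    else causalState μ P F (P (Classical.arbitrary Ω)) with hg
  have hgs : ∀ p, g (η p) = causalState μ P F p := by
    intro p
    have hex : ∃ p', η p' = η p := ⟨p, rfl⟩
    rw [hg]
    simp only [dif_pos hex]
    exact Quotient.sound (hfac _ _ hex.choose_spec)
  have hfun : (fun ω => causalState μ P F (P ω)) = fun ω => g (η (P ω)) :=
    funext fun ω => (hgs (P ω)).symm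
  rw [hfun]
  exact my_Hent_comp_le μ hμ0 (fun ω => η (P ω)) g
end
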